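/- Let d ≥ 9 be an odd integer and let n be a positive integer with 4n ≥ d³ + 3d − 4. Then there exist integers q and r such that n = dq + r, q is odd, and either (r is odd and r² ≤ 4q) or (r ≡ 2 (mod 4) and r² ≤ 16q). -/

import Mathlib

/-- if `d ≥ 9` is odd and `4n ≥ d³ + 3d − 4` (`n ≥ 1`), then `n = dq + r` for
some integers `q, r` with `q` odd and either (`r` odd and `r² ≤ 4q`) or
(`r ≡ 2 (mod 4)` and `r² ≤ 16q`). -/
theorem kiming_division
    (d n : ℤ) (hd9 : 9 ≤ d) (hdodd : Odd d) (hn : 1 ≤ n)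
    (hbound : d ^ 3 + 3 * d - 4 ≤ 4 * n) :
    ∃ q r : ℤ, n = d * q + r ∧ Odd q ∧
      ((Odd r ∧ r ^ 2 ≤ 4 * q) ∨ (r % 4 = 2 ∧ r ^ 2 ≤ 16 * q)) := by
  have hd0 : (0:ℤ) < d := by linarith
  have hd2 : d % 2 = 1 := Int.odd_iff.mp hdodd
  rcases Int.even_or_odd n with hne | hno
  · -- n even: r odd branch
    have hn2 : n % 2 = 0 := Int.even_iff.mp hne
    refine ⟨2 * (n / (2*d)) + 1, n % (2*d) - d, ?_, ⟨n / (2*d), by ring⟩, ?_⟩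
    · have key := Int.mul_ediv_add_emod n (2*d)
      linear_combination -key
    · set r := n % (2*d) - d with hrdef
      have h1 : 0 ≤ n % (2*d) := Int.emod_nonneg _ (by positivity)
      have h2 : n % (2*d) < 2*d := Int.emod_lt_of_pos _ (by positivity)
      have h3 : n % (2*d) % 2 = n % 2 := Int.emod_emod_of_dvd n ⟨d, rfl⟩
      have hro : r % 2 = 1 := by omega
      have hlb : -d ≤ r := by omega
      have hub : r ≤ d - 2 := by omega
      left
      refine ⟨Int.odd_iff.mpr hro, ?_⟩
      have hq : d * (2 * (n / (2*d)) + 1) = n - r := by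
        have key := Int.mul_ediv_add_emod n (2*d)
        linear_combination key
      have hdr : d * r^2 ≤ 4 * (n - r) := by
        nlinarith [mul_nonneg (mul_nonneg (by linarith : (0:ℤ) ≤ r + d) (by linarith : (0:ℤ) ≤ d - 2 - r)) hd0.le,
          mul_nonneg (by linarith : (0:ℤ) ≤ 2*d - 4) (by linarith : (0:ℤ) ≤ r + d)]
      have := (mul_le_mul_iff_right₀ hd0).mp (by linarith [hdr, hq] : d * r^2 ≤ d * (4 * (2 * (n / (2*d)) + 1)))
      linarith
  · -- n odd: r ≡ 2 mod 4 branch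
    have hn2 : n % 2 = 1 := Int.odd_iff.mp hno
    set x := n * (1 - d^2) with hxdef
    set E := x / (4*d) with hEdef
    set M := x % (4*d) with hMdef
    have key : 4*d*E + M = x := Int.mul_ediv_add_emod x (4*d)
    have h1 : 0 ≤ M := Int.emod_nonneg _ (by positivity)
    have h2 : M < 4*d := Int.emod_lt_of_pos _ (by positivity)
    have hM4 : M % 4 = x % 4 := Int.emod_emod_of_dvd x ⟨d, by ring⟩
    have hx4 : x % 4 = 0 := by
      obtain ⟨k, hk⟩ := hdodd
      have : x = 4 * (-(n * (k^2 + k))) := by rw [hxdef, hk]; ring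
      omega
    set r := M - 2*d with hrdef
    set q := n * d + 4 * E + 2 with hqdef
    have hr4 : r % 4 = 2 := by omega
    have hqodd : Odd q := by
      obtain ⟨k, hk⟩ := hno.mul hdodd
      exact ⟨k + 2*E + 1, by rw [hqdef, hk]; ring⟩
    refine ⟨q, r, ?_, hqodd, ?_⟩
    · rw [hqdef, hrdef]
      linear_combination -key
    · right
      refine ⟨hr4, ?_⟩
      have hlb : -(2*d) ≤ r := by omega
      have hub : r ≤ 2*d - 4 := by omega
      have hq : d * q = n - r := by
        rw [hqdef, hrdef]
        linear_combination key
      have hdr : d * r^2 ≤ 16 * (n - r) := by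
        nlinarith [mul_nonneg (mul_nonneg (by linarith : (0:ℤ) ≤ r + 2*d) (by linarith : (0:ℤ) ≤ 2*d - 4 - r)) hd0.le,
          mul_nonneg (by linarith : (0:ℤ) ≤ 4*d - 16) (by linarith : (0:ℤ) ≤ r + 2*d)]
      have := (mul_le_mul_iff_right₀ hd0).mp (by linarith [hdr, hq] : d * r^2 ≤ d * (16 * q))
      linarith
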